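/- Non-submodularity of the objective (Proposition 4): there exist n ∈ ℕ, nonnegative row-stochastic matrices A and W, parameters λ_i, β_i ∈ (0,1], an opinion control set C^Y ⊆ V, and action control sets S, T ⊆ V such that φ(S, C^Y) + φ(T, C^Y) < φ(S ∪ T, C^Y) + φ(S ∩ T, C^Y); in particular, the set function C^X ↦ φ(C^X, C^Y) is not submodular. -/

import Mathlib

/-- The quantity `δ_i(z)` determining the best-response action. -/
noncomputable def delta (n : ℕ) (A W : Fin n → Fin n → ℝ) (l b : Fin n → ℝ)
    (i : Fin n) (x y : Fin n → ℝ) : ℝ :=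
  2 * b i * (1 - l i) * ∑ j, W i j * y j + (1 - b i) * ∑ j, A i j * x j

/-- Assumption 1 on the revision sequence: there is `T < ∞` such that every
agent activates at least once in every window of `T` consecutive time steps. -/
def RevOK (n : ℕ) (R : ℕ → Finset (Fin n)) : Prop :=
  ∃ T : ℕ, ∀ t : ℕ, ∀ i : Fin n, ∃ s, s < T ∧ i ∈ R (t + s)

/-- The controlled coevolutionary trajectory with control sets `CX, CY`:
controlled coordinates are pinned to `+1` for all `t ≥ 0`, uncontrolled ones
start at `-1` and follow the best-response dynamics when activated. -/
def IsCtrlTraj (n : ℕ) (A W : Fin n → Fin n → ℝ) (l b : Fin n → ℝ)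
    (R : ℕ → Finset (Fin n)) (CX CY : Finset (Fin n))
    (x y : ℕ → Fin n → ℝ) : Prop :=
  (∀ i ∈ CX, ∀ t, x t i = 1) ∧
  (∀ i ∈ CY, ∀ t, y t i = 1) ∧
  (∀ i, i ∉ CX → x 0 i = -1) ∧
  (∀ i, i ∉ CY → y 0 i = -1) ∧
  (∀ t, ∀ i, i ∉ CX →
    x (t + 1) i =
      if i ∈ R t then
        if 0 < delta n A W l b i (x t) (y t) then 1
        else if delta n A W l b i (x t) (y t) < 0 then -1
        else x t i
      else x t i) ∧
  (∀ t, ∀ i, i ∉ CY →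
    y (t + 1) i =
      if i ∈ R t then (1 - l i) * (∑ j, W i j * y t j) + l i * x (t + 1) i
      else y t i)

/-- The trajectory reaches the `+1` consensus (actions) in finite time. -/
def Reaches (n : ℕ) (x : ℕ → Fin n → ℝ) : Prop :=
  ∃ T : ℕ, ∀ t, T ≤ t → ∀ i, x t i = 1

open Classical in
/-- The objective: phi = 1 iff for every revision sequence satisfying
Assumption 1, the controlled trajectory reaches the +1 consensus. -/
noncomputable def phi (n : ℕ) (A W : Fin n → Fin n → ℝ) (l b : Fin n → ℝ)
    (CX CY : Finset (Fin n)) : ℕ :=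
  if ∀ (R : ℕ → Finset (Fin n)) (x y : ℕ → Fin n → ℝ),
      RevOK n R → IsCtrlTraj n A W l b R CX CY x y → Reaches n x
  then 1 else 0

noncomputable def Amat : Fin 3 → Fin 3 → ℝ := fun i j =>
  if i = 2 then (if j = 2 then 0 else 1/2) else (if i = j then 1 else 0)
noncomputable def Wmat : Fin 3 → Fin 3 → ℝ := fun i j => if i = j then 1 else 0
noncomputable def lvec : Fin 3 → ℝ := fun _ => 1
noncomputable def bvec : Fin 3 → ℝ := fun _ => 1/2

lemma delta_eval (i : Fin 3) (x y : Fin 3 → ℝ) :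
    delta 3 Amat Wmat lvec bvec i x y
      = (1/2) * (Amat i 0 * x 0 + Amat i 1 * x 1 + Amat i 2 * x 2) := by
  unfold delta lvec bvec
  rw [Fin.sum_univ_three, Fin.sum_univ_three]
  ring

lemma phi_single (k : Fin 3) (hk : k = 0 ∨ k = 1) :
    phi 3 Amat Wmat lvec bvec {k} ∅ = 0 := by
  rw [phi, if_neg]
  intro h
  have hR : RevOK 3 (fun _ => Finset.univ) := ⟨1, fun t i => ⟨0, by norm_num, Finset.mem_univ i⟩⟩
  set x : ℕ → Fin 3 → ℝ := fun _ i => if i = k then 1 else -1 with hxdef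
  set y : ℕ → Fin 3 → ℝ := fun t i => if t = 0 then -1 else if i = k then 1 else -1 with hydef
  have hct : IsCtrlTraj 3 Amat Wmat lvec bvec (fun _ => Finset.univ) {k} ∅ x y := by
    refine ⟨?_, ?_, ?_, ?_, ?_, ?_⟩
    · intro i hi t; simp only [Finset.mem_singleton] at hi; simp [hxdef, hi]
    · intro i hi; simp at hi
    · intro i hi; simp only [Finset.mem_singleton] at hi; simp [hxdef, hi]
    · intro i _; simp [hydef]
    · intro t i hi
      simp only [Finset.mem_singleton] at hi
      rw [if_pos (Finset.mem_univ i)]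
      rcases hk with rfl | rfl
      · have hi' : i = 1 ∨ i = 2 := by
          fin_cases i; exacts [absurd rfl hi, Or.inl rfl, Or.inr rfl]
        rcases hi' with rfl | rfl
        · have hd : delta 3 Amat Wmat lvec bvec 1 (x t) (y t) = -(1/2) := by
            rw [delta_eval]; simp [Amat, hxdef]
          rw [hd]; norm_num; simp [hxdef]
        · have hd : delta 3 Amat Wmat lvec bvec 2 (x t) (y t) = 0 := by
            rw [delta_eval]; simp [Amat, hxdef]
          rw [hd]; norm_num; simp [hxdef]
      · have hi' : i = 0 ∨ i = 2 := by
          fin_cases i; exacts [Or.inl rfl, absurd rfl hi, Or.inr rfl]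
        rcases hi' with rfl | rfl
        · have hd : delta 3 Amat Wmat lvec bvec 0 (x t) (y t) = -(1/2) := by
            rw [delta_eval]; simp [Amat, hxdef]
          rw [hd]; norm_num; simp [hxdef]
        · have hd : delta 3 Amat Wmat lvec bvec 2 (x t) (y t) = 0 := by
            rw [delta_eval]; simp [Amat, hxdef]
          rw [hd]; norm_num; simp [hxdef]
    · intro t i _
      rw [if_pos (Finset.mem_univ i)]
      simp [hydef, hxdef, lvec, Nat.succ_ne_zero]
  have := h _ x y hR hct
  obtain ⟨T, hT⟩ := this
  rcases hk with rfl | rfl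
  · have := hT T le_rfl 1; simp [hxdef] at this; norm_num at this
  · have := hT T le_rfl 0; simp [hxdef] at this; norm_num at this

lemma phi_union : phi 3 Amat Wmat lvec bvec ({0} ∪ {1}) ∅ = 1 := by
  rw [phi, if_pos]
  rintro R x y ⟨T0, hT0⟩ ⟨h1, _, _, _, h5, _⟩
  have hx0 : ∀ t, x t 0 = 1 := h1 0 (by decide)
  have hx1 : ∀ t, x t 1 = 1 := h1 1 (by decide)
  have hd : ∀ t, delta 3 Amat Wmat lvec bvec 2 (x t) (y t) = 1/2 := by
    intro t; rw [delta_eval, hx0, hx1]; simp [Amat]; norm_num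
  have h2 : (2 : Fin 3) ∉ ({0} ∪ {1} : Finset (Fin 3)) := by decide
  have hstep : ∀ t, 2 ∈ R t → x (t+1) 2 = 1 := by
    intro t ht
    rw [h5 t 2 h2, if_pos ht, if_pos (by rw [hd]; norm_num)]
  have hkeep : ∀ t, x t 2 = 1 → x (t+1) 2 = 1 := by
    intro t ht
    rw [h5 t 2 h2]
    split_ifs with h h' h''
    · rfl
    · exact absurd (hd t) (by intro e; rw [e] at h''; norm_num at h'')
    · exact ht
    · exact ht
  obtain ⟨s, _, hmem⟩ := hT0 0 2
  rw [Nat.zero_add] at hmem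
  have hall : ∀ t, x (s + 1 + t) 2 = 1 := by
    intro t
    induction t with
    | zero => exact hstep s hmem
    | succ n ih => rw [← Nat.add_assoc]; exact hkeep _ ih
  refine ⟨s + 1, fun t ht i => ?_⟩
  fin_cases i
  · exact hx0 t
  · exact hx1 t
  · have := hall (t - (s+1)); rwa [Nat.add_sub_cancel' ht] at this

lemma fin3cases (i : Fin 3) : i = 0 ∨ i = 1 ∨ i = 2 := by
  fin_cases i
  exacts [Or.inl rfl, Or.inr (Or.inl rfl), Or.inr (Or.inr rfl)]


/-- Proposition 4, non-submodularity of the objective. -/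
theorem phi_not_submodular :
    ∃ (n : ℕ) (A W : Fin n → Fin n → ℝ) (l b : Fin n → ℝ),
      (∀ i j, 0 ≤ A i j) ∧ (∀ i j, A i j ≤ 1) ∧ (∀ i, ∑ j, A i j = 1) ∧
      (∀ i j, 0 ≤ W i j) ∧ (∀ i j, W i j ≤ 1) ∧ (∀ i, ∑ j, W i j = 1) ∧
      (∀ i, 0 < l i ∧ l i ≤ 1) ∧ (∀ i, 0 < b i ∧ b i ≤ 1) ∧
      ∃ (CY S T : Finset (Fin n)),
        phi n A W l b S CY + phi n A W l b T CY <
          phi n A W l b (S ∪ T) CY + phi n A W l b (S ∩ T) CY := by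
  refine ⟨3, Amat, Wmat, lvec, bvec, ?_, ?_, ?_, ?_, ?_, ?_, ?_, ?_, ∅, {0}, {1}, ?_⟩
  · intro i j; simp only [Amat]; split_ifs <;> norm_num
  · intro i j; simp only [Amat]; split_ifs <;> norm_num
  · intro i
    rcases fin3cases i with rfl | rfl | rfl <;>
      · rw [Fin.sum_univ_three]; simp [Amat]; try norm_num
  · intro i j; simp only [Wmat]; split_ifs <;> norm_num
  · intro i j; simp only [Wmat]; split_ifs <;> norm_num
  · intro i
    rcases fin3cases i with rfl | rfl | rfl <;>
      · rw [Fin.sum_univ_three]; simp [Wmat]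
  · intro i; exact ⟨by norm_num [lvec], by norm_num [lvec]⟩
  · intro i; exact ⟨by norm_num [bvec], by norm_num [bvec]⟩
  · rw [phi_single 0 (Or.inl rfl), phi_single 1 (Or.inr rfl), phi_union]
    omega
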